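/- Let α ∈ ℝ, ε > 0, let N ≥ 1, let β_1, …, β_N ∈ ℝ and P_1^*, Q_1^*, …, P_N^*, Q_N^* ∈ ℝ^{d×d}. Suppose r : [0,∞) → ℝ^{d×d} satisfies r(t) = Σ_{j=1}^N e^{α t} { P_j^* cos(β_j t) + Q_j^* sin(β_j t) } + R(t) for t ≥ 0, where ‖R(t)‖ ≤ M e^{(α−ε) t} for all t ≥ 0 and some M > 0. Let f : [0,∞) → ℝ^d be continuous with ∫₀^∞ e^{−α t} |f(t)| dt < ∞. Then lim_{t→∞} ( e^{−α t} ∫₀^t r(t−s) f(s) ds − Σ_{j=1}^N { D_{1,j} sin(β_j t) + D_{2,j} cos(β_j t) } ) = 0, where D_{1,j} = ∫₀^∞ e^{−α s} { P_j^* sin(β_j s) + Q_j^* cos(β_j s) } f(s) ds and D_{2,j} = ∫₀^∞ e^{−α s} { P_j^* cos(β_j s) − Q_j^* sin(β_j s) } f(s) ds. -/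

import Mathlib

open MeasureTheory Set Filter Matrix

/-- Frobenius norm of a real matrix. -/
noncomputable def frob {d e : ℕ} (A : Matrix (Fin d) (Fin e) ℝ) : ℝ :=
  Real.sqrt (∑ i, ∑ j, (A i j) ^ 2)

/-- Euclidean norm on `ℝ^d`. -/
noncomputable def eNorm {d : ℕ} (v : Fin d → ℝ) : ℝ :=
  Real.sqrt (∑ i, (v i) ^ 2)

lemma frob_nonneg {d e : ℕ} (A : Matrix (Fin d) (Fin e) ℝ) : 0 ≤ frob A := Real.sqrt_nonneg _

lemma eNorm_nonneg {d : ℕ} (v : Fin d → ℝ) : 0 ≤ eNorm v := Real.sqrt_nonneg _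

lemma abs_coord_le_eNorm {d : ℕ} (v : Fin d → ℝ) (k : Fin d) : |v k| ≤ eNorm v := by
  rw [eNorm, ← Real.sqrt_sq_eq_abs]
  exact Real.sqrt_le_sqrt (Finset.single_le_sum (fun i _ => sq_nonneg (v i)) (Finset.mem_univ k))

lemma abs_entry_le_frob {d e : ℕ} (A : Matrix (Fin d) (Fin e) ℝ) (i : Fin d) (k : Fin e) :
    |A i k| ≤ frob A := by
  rw [frob, ← Real.sqrt_sq_eq_abs]
  apply Real.sqrt_le_sqrt
  calc (A i k) ^ 2 ≤ ∑ j, (A i j) ^ 2 :=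
        Finset.single_le_sum (f := fun j => (A i j) ^ 2) (fun j _ => sq_nonneg _) (Finset.mem_univ k)
    _ ≤ ∑ i', ∑ j, (A i' j) ^ 2 :=
        Finset.single_le_sum (f := fun i' => ∑ j, (A i' j) ^ 2)
          (fun i' _ => Finset.sum_nonneg fun j _ => sq_nonneg _) (Finset.mem_univ i)

lemma abs_mulVec_le {d : ℕ} (Mm : Matrix (Fin d) (Fin d) ℝ) (v : Fin d → ℝ) (i : Fin d)
    {c : ℝ} (hc : ∀ i' k, |Mm i' k| ≤ c) :
    |Mm.mulVec v i| ≤ (d : ℝ) * c * eNorm v := by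
  have h1 : |Mm.mulVec v i| ≤ ∑ k, |Mm i k * v k| := by
    simpa [Matrix.mulVec, dotProduct] using
      Finset.abs_sum_le_sum_abs (fun k => Mm i k * v k) Finset.univ
  refine h1.trans ?_
  have h2 : ∀ k : Fin d, |Mm i k * v k| ≤ c * eNorm v := fun k => by
    rw [abs_mul]
    exact mul_le_mul (hc i k) (abs_coord_le_eNorm v k) (abs_nonneg _)
      ((abs_nonneg _).trans (hc i k))
  calc ∑ k, |Mm i k * v k| ≤ ∑ _k : Fin d, c * eNorm v := Finset.sum_le_sum fun k _ => h2 k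
    _ = (d : ℝ) * c * eNorm v := by simp [Finset.sum_const, mul_assoc]

lemma tendsto_tail_integral {h : ℝ → ℝ} (hint : IntegrableOn h (Ici 0)) :
    Tendsto (fun t => ∫ s in Ioi t, h s) atTop (nhds 0) := by
  have hIoi : IntegrableOn h (Ioi 0) := hint.mono_set Ioi_subset_Ici_self
  have key : Tendsto (fun t => ∫ s in (0:ℝ)..t, h s) atTop (nhds (∫ s in Ioi (0:ℝ), h s)) :=
    intervalIntegral_tendsto_integral_Ioi 0 hIoi tendsto_id
  have key2 : Tendsto (fun t => (∫ s in Ioi (0:ℝ), h s) - ∫ s in (0:ℝ)..t, h s) atTop (nhds 0) := by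
    have := tendsto_const_nhds (x := ∫ s in Ioi (0:ℝ), h s) (f := atTop (α := ℝ)) |>.sub key
    simpa using this
  refine key2.congr' ?_
  filter_upwards [eventually_ge_atTop (0:ℝ)] with t ht
  have hsplit : ∫ s in Ioi (0:ℝ), h s = (∫ s in Ioc 0 t, h s) + ∫ s in Ioi t, h s := by
    rw [← setIntegral_union (Ioc_disjoint_Ioi le_rfl) measurableSet_Ioi
      (hIoi.mono_set Ioc_subset_Ioi_self) (hIoi.mono_set (Ioi_subset_Ioi ht)),
      Ioc_union_Ioi_eq_Ioi ht]
  rw [intervalIntegral.integral_of_le ht, hsplit]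
  ring

lemma exp_factor_le_one {ε t s : ℝ} (hε : 0 < ε) (hs : s ≤ t) :
    Real.exp (-(ε * (t - s))) ≤ 1 :=
  Real.exp_le_one_iff.2 (by nlinarith)

lemma integrableOn_conv_exp {g : ℝ → ℝ} (hg : IntegrableOn g (Ici 0))
    (hg0 : ∀ s, 0 ≤ g s) {ε : ℝ} (hε : 0 < ε) (t : ℝ) :
    IntegrableOn (fun s => Real.exp (-(ε * (t - s))) * g s) (Icc 0 t) := by
  have hgI : IntegrableOn g (Icc 0 t) := hg.mono_set Icc_subset_Ici_self
  refine Integrable.mono' hgI ?_ ?_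
  · exact ((Real.continuous_exp.comp (by fun_prop)).aestronglyMeasurable).mul
      hgI.aestronglyMeasurable
  · refine (ae_restrict_iff' measurableSet_Icc).2 (Eventually.of_forall fun s hs => ?_)
    rw [Real.norm_eq_abs, abs_mul, Real.abs_exp, abs_of_nonneg (hg0 s)]
    calc Real.exp (-(ε * (t - s))) * g s ≤ 1 * g s :=
          mul_le_mul_of_nonneg_right (exp_factor_le_one hε hs.2) (hg0 s)
      _ = g s := one_mul _

lemma tendsto_conv_exp {g : ℝ → ℝ} (hg : IntegrableOn g (Ici 0))
    (hg0 : ∀ s, 0 ≤ g s) {ε : ℝ} (hε : 0 < ε) :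
    Tendsto (fun t => ∫ s in Icc (0:ℝ) t, Real.exp (-(ε * (t - s))) * g s) atTop (nhds 0) := by
  set I : ℝ := ∫ s in Ici (0:ℝ), g s with hI
  have hg0' : 0 ≤ᵐ[volume.restrict (Ici (0:ℝ))] g := Eventually.of_forall hg0
  have htail : Tendsto (fun T : ℝ => ∫ s in Ioi T, g s) atTop (nhds 0) := tendsto_tail_integral hg
  rw [Metric.tendsto_atTop]
  intro δ hδ
  obtain ⟨T, hTtail, hT0⟩ : ∃ T : ℝ, (∫ s in Ioi T, g s) < δ / 2 ∧ 0 ≤ T := by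
    have h2 : ∀ᶠ T in atTop, (∫ s in Ioi T, g s) < δ / 2 :=
      htail.eventually (gt_mem_nhds (show (0:ℝ) < δ / 2 by linarith))
    exact (h2.and (eventually_ge_atTop (0:ℝ))).exists
  have hInn : 0 ≤ I := setIntegral_nonneg measurableSet_Ici fun s _ => hg0 s
  have hdecay : Tendsto (fun t : ℝ => Real.exp (-(ε * (t - T))) * I) atTop (nhds 0) := by
    have h1 : Tendsto (fun t : ℝ => ε * (t - T)) atTop atTop :=
      (tendsto_atTop_add_const_right atTop (-T) tendsto_id).const_mul_atTop hε
    have h2 : Tendsto (fun t : ℝ => Real.exp (-(ε * (t - T)))) atTop (nhds 0) :=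
      Real.tendsto_exp_atBot.comp (tendsto_neg_atTop_atBot.comp h1)
    simpa using h2.mul_const I
  obtain ⟨T', hT'⟩ : ∃ T' : ℝ, T ≤ T' ∧
      ∀ t ≥ T', Real.exp (-(ε * (t - T))) * I < δ / 2 := by
    have h3 : ∀ᶠ t in atTop, Real.exp (-(ε * (t - T))) * I < δ / 2 :=
      hdecay.eventually (gt_mem_nhds (show (0:ℝ) < δ / 2 by linarith))
    rcases (h3.and (eventually_ge_atTop T)).exists_forall_of_atTop with ⟨T', hT'⟩
    exact ⟨max T' T, le_max_right _ _, fun t ht =>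
      (hT' t (le_trans (le_max_left _ _) ht)).1⟩
  refine ⟨T', fun t ht => ?_⟩
  have hTt : T ≤ t := hT'.1.trans ht
  have h0t : (0:ℝ) ≤ t := hT0.trans hTt
  have hw0 : ∀ s, 0 ≤ Real.exp (-(ε * (t - s))) * g s :=
    fun s => mul_nonneg (Real.exp_pos _).le (hg0 s)
  have hwint : IntegrableOn (fun s => Real.exp (-(ε * (t - s))) * g s) (Icc 0 t) :=
    integrableOn_conv_exp hg hg0 hε t
  have hdisj : Disjoint (Icc (0:ℝ) T) (Ioc T t) :=
    Set.disjoint_left.2 fun x hx hx' => absurd hx.2 (not_le.2 hx'.1)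
  have hsplit : (∫ s in Icc (0:ℝ) t, Real.exp (-(ε * (t - s))) * g s)
      = (∫ s in Icc (0:ℝ) T, Real.exp (-(ε * (t - s))) * g s)
      + ∫ s in Ioc T t, Real.exp (-(ε * (t - s))) * g s := by
    rw [← setIntegral_union hdisj measurableSet_Ioc
      (hwint.mono_set (Icc_subset_Icc_right hTt))
      (hwint.mono_set fun x hx => ⟨hT0.trans hx.1.le, hx.2⟩),
      Icc_union_Ioc_eq_Icc hT0 hTt]
  have hb1 : (∫ s in Icc (0:ℝ) T, Real.exp (-(ε * (t - s))) * g s)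
      ≤ Real.exp (-(ε * (t - T))) * I := by
    have step1 : (∫ s in Icc (0:ℝ) T, Real.exp (-(ε * (t - s))) * g s)
        ≤ ∫ s in Icc (0:ℝ) T, Real.exp (-(ε * (t - T))) * g s := by
      refine setIntegral_mono_on (hwint.mono_set (Icc_subset_Icc_right hTt))
        ((hg.mono_set Icc_subset_Ici_self).const_mul _) measurableSet_Icc fun s hs => ?_
      exact mul_le_mul_of_nonneg_right
        (Real.exp_le_exp.2 (by nlinarith [hs.2])) (hg0 s)
    have step2 : (∫ s in Icc (0:ℝ) T, Real.exp (-(ε * (t - T))) * g s)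
        = Real.exp (-(ε * (t - T))) * ∫ s in Icc (0:ℝ) T, g s :=
      integral_const_mul _ _
    have step3 : (∫ s in Icc (0:ℝ) T, g s) ≤ I :=
      setIntegral_mono_set hg hg0' (HasSubset.Subset.eventuallyLE Icc_subset_Ici_self)
    calc (∫ s in Icc (0:ℝ) T, Real.exp (-(ε * (t - s))) * g s)
        ≤ ∫ s in Icc (0:ℝ) T, Real.exp (-(ε * (t - T))) * g s := step1
      _ = Real.exp (-(ε * (t - T))) * ∫ s in Icc (0:ℝ) T, g s := step2
      _ ≤ Real.exp (-(ε * (t - T))) * I :=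
          mul_le_mul_of_nonneg_left step3 (Real.exp_pos _).le
  have hb2 : (∫ s in Ioc T t, Real.exp (-(ε * (t - s))) * g s) ≤ ∫ s in Ioi T, g s := by
    have hIoiT : IntegrableOn g (Ioi T) :=
      hg.mono_set fun x hx => le_of_lt (lt_of_le_of_lt hT0 hx)
    have step1 : (∫ s in Ioc T t, Real.exp (-(ε * (t - s))) * g s) ≤ ∫ s in Ioc T t, g s := by
      refine setIntegral_mono_on
        (hwint.mono_set fun x hx => ⟨hT0.trans hx.1.le, hx.2⟩)
        (hIoiT.mono_set Ioc_subset_Ioi_self) measurableSet_Ioc fun s hs => ?_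
      calc Real.exp (-(ε * (t - s))) * g s ≤ 1 * g s :=
            mul_le_mul_of_nonneg_right (exp_factor_le_one hε hs.2) (hg0 s)
        _ = g s := one_mul _
    refine step1.trans (setIntegral_mono_set hIoiT (Eventually.of_forall hg0)
      (HasSubset.Subset.eventuallyLE Ioc_subset_Ioi_self))
  have hnn : 0 ≤ ∫ s in Icc (0:ℝ) t, Real.exp (-(ε * (t - s))) * g s :=
    setIntegral_nonneg measurableSet_Icc fun s _ => hw0 s
  rw [Real.dist_eq, sub_zero, abs_of_nonneg hnn]
  calc (∫ s in Icc (0:ℝ) t, Real.exp (-(ε * (t - s))) * g s)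
      = _ + _ := hsplit
    _ ≤ Real.exp (-(ε * (t - T))) * I + ∫ s in Ioi T, g s := add_le_add hb1 hb2
    _ < δ / 2 + δ / 2 := add_lt_add (hT'.2 t ht) hTtail
    _ = δ := by ring

lemma integral_pi_apply {d : ℕ} {μ : Measure ℝ} {F : ℝ → Fin d → ℝ}
    (hF : Integrable F μ) (i : Fin d) :
    (∫ s, F s ∂μ) i = ∫ s, F s i ∂μ := by
  have := (ContinuousLinearMap.proj (R := ℝ) (φ := fun _ : Fin d => ℝ) i).integral_comp_comm hF
  simpa using this.symm

lemma sum_mulVec' {d : ℕ} {ι : Type*} (s : Finset ι) (M : ι → Matrix (Fin d) (Fin d) ℝ)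
    (v : Fin d → ℝ) : (∑ j ∈ s, M j).mulVec v = ∑ j ∈ s, (M j).mulVec v := by
  ext i
  simp only [Matrix.mulVec, dotProduct, Matrix.sum_apply, Finset.sum_apply,
    Finset.sum_mul]
  exact Finset.sum_comm

lemma entry_bound {d : ℕ} (P Q : Matrix (Fin d) (Fin d) ℝ) (c1 c2 : ℝ)
    (h1 : |c1| ≤ 1) (h2 : |c2| ≤ 1) (i' k : Fin d) :
    |(c1 • P + c2 • Q) i' k| ≤ frob P + frob Q := by
  simp only [Matrix.add_apply, Matrix.smul_apply, smul_eq_mul]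
  calc |c1 * P i' k + c2 * Q i' k| ≤ |c1 * P i' k| + |c2 * Q i' k| := abs_add_le _ _
    _ = |c1| * |P i' k| + |c2| * |Q i' k| := by rw [abs_mul, abs_mul]
    _ ≤ 1 * frob P + 1 * frob Q :=
        add_le_add (mul_le_mul h1 (abs_entry_le_frob P i' k) (abs_nonneg _) zero_le_one)
          (mul_le_mul h2 (abs_entry_le_frob Q i' k) (abs_nonneg _) zero_le_one)
    _ = frob P + frob Q := by ring

lemma trig_identity (α βj t s P Q : ℝ) :
    Real.exp (-(α*t)) * (Real.exp (α*(t-s)) * (Real.cos (βj*(t-s)) * P + Real.sin (βj*(t-s)) * Q))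
      = Real.sin (βj*t) * (Real.exp (-(α*s)) * (Real.sin (βj*s) * P + Real.cos (βj*s) * Q))
      + Real.cos (βj*t) * (Real.exp (-(α*s)) * (Real.cos (βj*s) * P - Real.sin (βj*s) * Q)) := by
  have hexp : Real.exp (-(α*t)) * Real.exp (α*(t-s)) = Real.exp (-(α*s)) := by
    rw [← Real.exp_add]; ring_nf
  have hc : βj*(t-s) = βj*t - βj*s := by ring
  rw [hc, Real.cos_sub, Real.sin_sub]
  linear_combination ((Real.cos (βj*t)*Real.cos (βj*s) + Real.sin (βj*t)*Real.sin (βj*s)) * P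
    + (Real.sin (βj*t)*Real.cos (βj*s) - Real.cos (βj*t)*Real.sin (βj*s)) * Q) * hexp

lemma aux_cont {d : ℕ} {f : ℝ → Fin d → ℝ} (hf : Continuous f)
    (P Q : Matrix (Fin d) (Fin d) ℝ) {c1 c2 : ℝ → ℝ} (hc1 : Continuous c1)
    (hc2 : Continuous c2) :
    Continuous (fun s => (c1 s • P + c2 s • Q).mulVec (f s)) := by
  apply continuous_pi; intro i'
  simp only [Matrix.mulVec, dotProduct, Matrix.add_apply, Matrix.smul_apply, smul_eq_mul]
  exact continuous_finset_sum _ fun k _ =>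
    ((hc1.mul continuous_const).add (hc2.mul continuous_const)).mul
      ((continuous_apply k).comp hf)

lemma aux_int {d : ℕ} {α : ℝ} {f : ℝ → Fin d → ℝ} (hf : Continuous f)
    (hfint : IntegrableOn (fun t => Real.exp (-(α * t)) * eNorm (f t)) (Ici 0))
    (P Q : Matrix (Fin d) (Fin d) ℝ) {c1 c2 : ℝ → ℝ} (hc1 : Continuous c1)
    (hc2 : Continuous c2) (hb1 : ∀ s, |c1 s| ≤ 1) (hb2 : ∀ s, |c2 s| ≤ 1) :
    IntegrableOn (fun s => Real.exp (-(α * s)) • ((c1 s • P + c2 s • Q).mulVec (f s)))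
      (Ici 0) := by
  set C : ℝ := (d : ℝ) * (frob P + frob Q) with hC
  have hC0 : 0 ≤ C := mul_nonneg (Nat.cast_nonneg _)
    (add_nonneg (frob_nonneg _) (frob_nonneg _))
  have hcontF : Continuous (fun s => Real.exp (-(α * s)) •
      ((c1 s • P + c2 s • Q).mulVec (f s))) :=
    (Real.continuous_exp.comp (by fun_prop)).smul (aux_cont hf P Q hc1 hc2)
  refine Integrable.mono' (hfint.const_mul C) hcontF.aestronglyMeasurable
    (Eventually.of_forall fun s => ?_)
  have hr0 : 0 ≤ C * (Real.exp (-(α * s)) * eNorm (f s)) :=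
    mul_nonneg hC0 (mul_nonneg (Real.exp_pos _).le (eNorm_nonneg _))
  rw [pi_norm_le_iff_of_nonneg hr0]
  intro i'
  simp only [Pi.smul_apply, smul_eq_mul, Real.norm_eq_abs, abs_mul, Real.abs_exp]
  calc Real.exp (-(α * s)) * |(c1 s • P + c2 s • Q).mulVec (f s) i'|
      ≤ Real.exp (-(α * s)) * ((d : ℝ) * (frob P + frob Q) * eNorm (f s)) :=
        mul_le_mul_of_nonneg_left
          (abs_mulVec_le _ _ _ (entry_bound P Q _ _ (hb1 s) (hb2 s)))
          (Real.exp_pos _).le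
    _ = C * (Real.exp (-(α * s)) * eNorm (f s)) := by rw [hC]; ring

lemma integrable_apply {d : ℕ} {μ : Measure ℝ} {F : ℝ → Fin d → ℝ}
    (hF : Integrable F μ) (i : Fin d) : Integrable (fun s => F s i) μ := by
  have := (ContinuousLinearMap.proj (R := ℝ) (φ := fun _ : Fin d => ℝ) i).integrable_comp hF
  simpa using this

/-- deterministic convolution asymptotics, case `n = 0`.
If `r(t) = Σ_j e^{αt}{P_j^* cos(β_j t) + Q_j^* sin(β_j t)} + R(t)` with
`‖R(t)‖ ≤ M e^{(α−ε)t}`, and `f` is continuous with `∫₀^∞ e^{−αt}|f(t)|dt < ∞`, then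
`e^{−αt} ∫₀^t r(t−s)f(s)ds − Σ_j {D_{1,j} sin(β_j t) + D_{2,j} cos(β_j t)} → 0`. -/
theorem stmt10 (d : ℕ) (α ε : ℝ) (hε : 0 < ε) (N : ℕ) (hN : 1 ≤ N)
    (β : Fin N → ℝ)
    (Pstar Qstar : Fin N → Matrix (Fin d) (Fin d) ℝ)
    (r Rr : ℝ → Matrix (Fin d) (Fin d) ℝ)
    (hRmeas : ∀ i k, Measurable fun t => Rr t i k)
    (M : ℝ) (hM : 0 < M)
    (hRbd : ∀ t ≥ (0 : ℝ), frob (Rr t) ≤ M * Real.exp ((α - ε) * t))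
    (hreq : ∀ t ≥ (0 : ℝ), r t =
      (∑ j, Real.exp (α * t) •
        (Real.cos (β j * t) • Pstar j + Real.sin (β j * t) • Qstar j)) + Rr t)
    (f : ℝ → Fin d → ℝ) (hf : Continuous f)
    (hfint : IntegrableOn (fun t => Real.exp (-(α * t)) * eNorm (f t)) (Ici 0)) :
    Tendsto (fun t : ℝ =>
      ((Real.exp (α * t))⁻¹ • ∫ s in Icc (0 : ℝ) t, (r (t - s)).mulVec (f s)) -
        ∑ j,
          (Real.sin (β j * t) •
            (∫ s in Ici (0 : ℝ), Real.exp (-(α * s)) •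
              ((Real.sin (β j * s) • Pstar j + Real.cos (β j * s) • Qstar j).mulVec (f s))) +
           Real.cos (β j * t) •
            (∫ s in Ici (0 : ℝ), Real.exp (-(α * s)) •
              ((Real.cos (β j * s) • Pstar j - Real.sin (β j * s) • Qstar j).mulVec (f s)))))
      atTop (nhds 0) := by
  have hg0 : ∀ s : ℝ, 0 ≤ Real.exp (-(α * s)) * eNorm (f s) := fun s =>
    mul_nonneg (Real.exp_pos _).le (eNorm_nonneg _)
  have heNc : Continuous fun s => eNorm (f s) := by
    unfold eNorm
    exact Real.continuous_sqrt.comp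
      (continuous_finset_sum _ fun k _ => ((continuous_apply k).comp hf).pow 2)
  -- vector integrability of the A_j and B_j integrands on [0, ∞)
  have hAint : ∀ j, IntegrableOn (fun s => Real.exp (-(α * s)) •
      ((Real.sin (β j * s) • Pstar j + Real.cos (β j * s) • Qstar j).mulVec (f s)))
      (Ici 0) := fun j =>
    aux_int hf hfint _ _ (by fun_prop) (by fun_prop)
      (fun s => Real.abs_sin_le_one _) (fun s => Real.abs_cos_le_one _)
  have hBint : ∀ j, IntegrableOn (fun s => Real.exp (-(α * s)) •
      ((Real.cos (β j * s) • Pstar j - Real.sin (β j * s) • Qstar j).mulVec (f s)))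
      (Ici 0) := by
    intro j
    have h := aux_int hf hfint (Pstar j) (Qstar j)
      (c1 := fun s => Real.cos (β j * s)) (c2 := fun s => -Real.sin (β j * s))
      (by fun_prop) (by fun_prop) (fun s => Real.abs_cos_le_one _)
      (fun s => by rw [abs_neg]; exact Real.abs_sin_le_one _)
    have heq : (fun s => Real.exp (-(α * s)) •
        ((Real.cos (β j * s) • Pstar j + (-Real.sin (β j * s)) • Qstar j).mulVec (f s)))
        = (fun s => Real.exp (-(α * s)) •
        ((Real.cos (β j * s) • Pstar j - Real.sin (β j * s) • Qstar j).mulVec (f s))) := by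
      funext s; rw [neg_smul, ← sub_eq_add_neg]
    rw [← heq]
    exact h
  -- scalar component fixed
  rw [tendsto_pi_nhds]
  intro i
  simp only [Pi.sub_apply, Finset.sum_apply, Pi.add_apply, Pi.smul_apply, smul_eq_mul,
    Pi.zero_apply]
  -- scalar integrands
  have haint : ∀ j, IntegrableOn (fun s => Real.exp (-(α * s)) *
      ((Real.sin (β j * s) • Pstar j + Real.cos (β j * s) • Qstar j).mulVec (f s) i))
      (Ici 0) := fun j => by
    have h := integrable_apply (hAint j) i
    simpa only [Pi.smul_apply, smul_eq_mul, IntegrableOn] using h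
  have hbint : ∀ j, IntegrableOn (fun s => Real.exp (-(α * s)) *
      ((Real.cos (β j * s) • Pstar j - Real.sin (β j * s) • Qstar j).mulVec (f s) i))
      (Ici 0) := fun j => by
    have h := integrable_apply (hBint j) i
    simpa only [Pi.smul_apply, smul_eq_mul, IntegrableOn] using h
  -- the limit function G
  have hG : Tendsto (fun t : ℝ =>
      (Real.exp (-(α * t)) * ∫ s in Icc (0:ℝ) t, ((Rr (t - s)).mulVec (f s)) i) -
        ∑ j, (Real.sin (β j * t) * (∫ s in Ioi t, Real.exp (-(α * s)) *
            ((Real.sin (β j * s) • Pstar j + Real.cos (β j * s) • Qstar j).mulVec (f s) i)) +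
          Real.cos (β j * t) * (∫ s in Ioi t, Real.exp (-(α * s)) *
            ((Real.cos (β j * s) • Pstar j - Real.sin (β j * s) • Qstar j).mulVec (f s) i))))
      atTop (nhds 0) := by
    have htends0 : Tendsto (fun t : ℝ => Real.exp (-(α * t)) *
        ∫ s in Icc (0:ℝ) t, ((Rr (t - s)).mulVec (f s)) i) atTop (nhds 0) := by
      apply squeeze_zero_norm' (a := fun t => ((d:ℝ) * M) *
          ∫ s in Icc (0:ℝ) t, Real.exp (-(ε * (t - s))) * (Real.exp (-(α * s)) * eNorm (f s)))
      · filter_upwards [eventually_ge_atTop (0:ℝ)] with t ht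
        have hρmeas : Measurable fun s => ((Rr (t - s)).mulVec (f s)) i := by
          simp only [Matrix.mulVec, dotProduct]
          exact Finset.measurable_sum _ fun k _ =>
            ((hRmeas i k).comp (measurable_const.sub measurable_id)).mul
              ((continuous_apply k).comp hf).measurable
        have hdcast : (0:ℝ) ≤ (d:ℝ) := Nat.cast_nonneg _
        have hdomc : Continuous fun s => ((d:ℝ) * M) *
            (Real.exp ((α - ε) * (t - s)) * eNorm (f s)) :=
          continuous_const.mul ((Real.continuous_exp.comp (by fun_prop)).mul heNc)
        have hdomint : IntegrableOn (fun s => ((d:ℝ) * M) *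
            (Real.exp ((α - ε) * (t - s)) * eNorm (f s))) (Icc 0 t) :=
          hdomc.integrableOn_Icc
        have hptbd : ∀ s ∈ Icc (0:ℝ) t, |((Rr (t - s)).mulVec (f s)) i| ≤
            ((d:ℝ) * M) * (Real.exp ((α - ε) * (t - s)) * eNorm (f s)) := by
          intro s hs
          have h1 : |((Rr (t - s)).mulVec (f s)) i| ≤
              (d:ℝ) * frob (Rr (t - s)) * eNorm (f s) :=
            abs_mulVec_le _ _ _ (fun i' k => abs_entry_le_frob _ i' k)
          have h2 : frob (Rr (t - s)) ≤ M * Real.exp ((α - ε) * (t - s)) :=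
            hRbd _ (by linarith [hs.2])
          have h3 := eNorm_nonneg (f s)
          calc |((Rr (t - s)).mulVec (f s)) i| ≤ (d:ℝ) * frob (Rr (t - s)) * eNorm (f s) := h1
            _ ≤ (d:ℝ) * (M * Real.exp ((α - ε) * (t - s))) * eNorm (f s) :=
                mul_le_mul_of_nonneg_right (mul_le_mul_of_nonneg_left h2 hdcast) h3
            _ = ((d:ℝ) * M) * (Real.exp ((α - ε) * (t - s)) * eNorm (f s)) := by ring
        have hρint : IntegrableOn (fun s => ((Rr (t - s)).mulVec (f s)) i) (Icc 0 t) := by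
          refine Integrable.mono' hdomint hρmeas.aestronglyMeasurable ?_
          refine (ae_restrict_iff' measurableSet_Icc).2 (Eventually.of_forall fun s hs => ?_)
          rw [Real.norm_eq_abs]
          exact hptbd s hs
        have step1 : |∫ s in Icc (0:ℝ) t, ((Rr (t - s)).mulVec (f s)) i| ≤
            ∫ s in Icc (0:ℝ) t, |((Rr (t - s)).mulVec (f s)) i| := by
          simpa only [Real.norm_eq_abs] using norm_integral_le_integral_norm
            (μ := volume.restrict (Icc (0:ℝ) t))
            (f := fun s => ((Rr (t - s)).mulVec (f s)) i)
        have step2 : (∫ s in Icc (0:ℝ) t, |((Rr (t - s)).mulVec (f s)) i|) ≤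
            ∫ s in Icc (0:ℝ) t, ((d:ℝ) * M) * (Real.exp ((α - ε) * (t - s)) * eNorm (f s)) :=
          setIntegral_mono_on hρint.abs hdomint measurableSet_Icc fun s hs =>
            hptbd s hs
        have step3 : Real.exp (-(α * t)) *
            (∫ s in Icc (0:ℝ) t, ((d:ℝ) * M) * (Real.exp ((α - ε) * (t - s)) * eNorm (f s)))
            = ((d:ℝ) * M) * ∫ s in Icc (0:ℝ) t,
                Real.exp (-(ε * (t - s))) * (Real.exp (-(α * s)) * eNorm (f s)) := by
          rw [← integral_const_mul, ← integral_const_mul]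
          refine setIntegral_congr_fun measurableSet_Icc fun s _ => ?_
          have hexp : Real.exp (-(α * t)) * Real.exp ((α - ε) * (t - s)) =
              Real.exp (-(ε * (t - s))) * Real.exp (-(α * s)) := by
            rw [← Real.exp_add, ← Real.exp_add]; ring_nf
          linear_combination ((d:ℝ) * M * eNorm (f s)) * hexp
        rw [Real.norm_eq_abs, abs_mul, Real.abs_exp, ← step3]
        have hexp0 := (Real.exp_pos (-(α * t))).le
        calc Real.exp (-(α * t)) * |∫ s in Icc (0:ℝ) t, ((Rr (t - s)).mulVec (f s)) i|
            ≤ Real.exp (-(α * t)) *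
              ∫ s in Icc (0:ℝ) t, ((d:ℝ) * M) * (Real.exp ((α - ε) * (t - s)) * eNorm (f s)) :=
              mul_le_mul_of_nonneg_left (step1.trans step2) hexp0
          _ = _ := rfl
      · simpa using (tendsto_conv_exp hfint hg0 hε).const_mul ((d:ℝ) * M)
    have hterm : ∀ j : Fin N, Tendsto (fun t : ℝ =>
        Real.sin (β j * t) * (∫ s in Ioi t, Real.exp (-(α * s)) *
          ((Real.sin (β j * s) • Pstar j + Real.cos (β j * s) • Qstar j).mulVec (f s) i)) +
        Real.cos (β j * t) * (∫ s in Ioi t, Real.exp (-(α * s)) *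
          ((Real.cos (β j * s) • Pstar j - Real.sin (β j * s) • Qstar j).mulVec (f s) i)))
        atTop (nhds 0) := by
      intro j
      have h1 : Tendsto (fun t : ℝ => Real.sin (β j * t) * (∫ s in Ioi t,
          Real.exp (-(α * s)) *
          ((Real.sin (β j * s) • Pstar j + Real.cos (β j * s) • Qstar j).mulVec (f s) i)))
          atTop (nhds 0) := by
        refine squeeze_zero_norm (fun t => ?_) (tendsto_tail_integral ((haint j).abs))
        rw [Real.norm_eq_abs, abs_mul]
        have hb : |∫ s in Ioi t, Real.exp (-(α * s)) *
            ((Real.sin (β j * s) • Pstar j + Real.cos (β j * s) • Qstar j).mulVec (f s) i)| ≤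
            ∫ s in Ioi t, |Real.exp (-(α * s)) *
            ((Real.sin (β j * s) • Pstar j + Real.cos (β j * s) • Qstar j).mulVec (f s) i)| := by
          simpa only [Real.norm_eq_abs] using norm_integral_le_integral_norm
            (μ := volume.restrict (Ioi t)) (f := fun s => Real.exp (-(α * s)) *
            ((Real.sin (β j * s) • Pstar j + Real.cos (β j * s) • Qstar j).mulVec (f s) i))
        calc |Real.sin (β j * t)| * |_| ≤ 1 * (∫ s in Ioi t, |Real.exp (-(α * s)) *
              ((Real.sin (β j * s) • Pstar j + Real.cos (β j * s) • Qstar j).mulVec (f s) i)|) :=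
              mul_le_mul (Real.abs_sin_le_one _) hb (abs_nonneg _) zero_le_one
          _ = _ := one_mul _
      have h2 : Tendsto (fun t : ℝ => Real.cos (β j * t) * (∫ s in Ioi t,
          Real.exp (-(α * s)) *
          ((Real.cos (β j * s) • Pstar j - Real.sin (β j * s) • Qstar j).mulVec (f s) i)))
          atTop (nhds 0) := by
        refine squeeze_zero_norm (fun t => ?_) (tendsto_tail_integral ((hbint j).abs))
        rw [Real.norm_eq_abs, abs_mul]
        have hb : |∫ s in Ioi t, Real.exp (-(α * s)) *
            ((Real.cos (β j * s) • Pstar j - Real.sin (β j * s) • Qstar j).mulVec (f s) i)| ≤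
            ∫ s in Ioi t, |Real.exp (-(α * s)) *
            ((Real.cos (β j * s) • Pstar j - Real.sin (β j * s) • Qstar j).mulVec (f s) i)| := by
          simpa only [Real.norm_eq_abs] using norm_integral_le_integral_norm
            (μ := volume.restrict (Ioi t)) (f := fun s => Real.exp (-(α * s)) *
            ((Real.cos (β j * s) • Pstar j - Real.sin (β j * s) • Qstar j).mulVec (f s) i))
        calc |Real.cos (β j * t)| * |_| ≤ 1 * (∫ s in Ioi t, |Real.exp (-(α * s)) *
              ((Real.cos (β j * s) • Pstar j - Real.sin (β j * s) • Qstar j).mulVec (f s) i)|) :=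
              mul_le_mul (Real.abs_cos_le_one _) hb (abs_nonneg _) zero_le_one
          _ = _ := one_mul _
      simpa using h1.add h2
    have hsum : Tendsto (fun t : ℝ => ∑ j : Fin N,
        (Real.sin (β j * t) * (∫ s in Ioi t, Real.exp (-(α * s)) *
          ((Real.sin (β j * s) • Pstar j + Real.cos (β j * s) • Qstar j).mulVec (f s) i)) +
        Real.cos (β j * t) * (∫ s in Ioi t, Real.exp (-(α * s)) *
          ((Real.cos (β j * s) • Pstar j - Real.sin (β j * s) • Qstar j).mulVec (f s) i))))
        atTop (nhds 0) := by
      have := tendsto_finset_sum Finset.univ (fun j (_ : j ∈ Finset.univ) => hterm j)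
      simpa using this
    simpa using htends0.sub hsum
  refine Tendsto.congr' ?_ hG
  filter_upwards [eventually_ge_atTop (0:ℝ)] with t ht
  have hdcast : (0:ℝ) ≤ (d:ℝ) := Nat.cast_nonneg _
  -- vector continuity / integrability on [0, t]
  have hcontpart : Continuous fun s : ℝ => (∑ j, Real.exp (α * (t - s)) •
      (Real.cos (β j * (t - s)) • Pstar j + Real.sin (β j * (t - s)) • Qstar j)).mulVec
      (f s) := by
    have hrw : (fun s : ℝ => (∑ j, Real.exp (α * (t - s)) •
        (Real.cos (β j * (t - s)) • Pstar j + Real.sin (β j * (t - s)) • Qstar j)).mulVec (f s))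
        = fun s : ℝ => ∑ j, Real.exp (α * (t - s)) •
          ((Real.cos (β j * (t - s)) • Pstar j + Real.sin (β j * (t - s)) • Qstar j).mulVec
            (f s)) := by
      funext s
      rw [sum_mulVec']
      exact Finset.sum_congr rfl fun j _ => Matrix.smul_mulVec _ _ _
    rw [hrw]
    exact continuous_finset_sum _ fun j _ =>
      (Real.continuous_exp.comp (by fun_prop)).smul (aux_cont hf _ _ (by fun_prop) (by fun_prop))
  have hRvecmeas : Measurable fun s : ℝ => (Rr (t - s)).mulVec (f s) := by
    apply measurable_pi_lambda
    intro i'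
    simp only [Matrix.mulVec, dotProduct]
    exact Finset.measurable_sum _ fun k _ =>
      ((hRmeas i' k).comp (measurable_const.sub measurable_id)).mul
        ((continuous_apply k).comp hf).measurable
  have hRvecint : IntegrableOn (fun s : ℝ => (Rr (t - s)).mulVec (f s)) (Icc 0 t) := by
    refine Integrable.mono'
      (g := fun s => ((d:ℝ) * M) * (Real.exp ((α - ε) * (t - s)) * eNorm (f s)))
      (Continuous.integrableOn_Icc (by fun_prop))
      hRvecmeas.aestronglyMeasurable ?_
    refine (ae_restrict_iff' measurableSet_Icc).2 (Eventually.of_forall fun s hs => ?_)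
    have hr0 : 0 ≤ ((d:ℝ) * M) * (Real.exp ((α - ε) * (t - s)) * eNorm (f s)) :=
      mul_nonneg (mul_nonneg hdcast hM.le)
        (mul_nonneg (Real.exp_pos _).le (eNorm_nonneg _))
    rw [pi_norm_le_iff_of_nonneg hr0]
    intro i'
    rw [Real.norm_eq_abs]
    have h1 : |((Rr (t - s)).mulVec (f s)) i'| ≤ (d:ℝ) * frob (Rr (t - s)) * eNorm (f s) :=
      abs_mulVec_le _ _ _ (fun i'' k => abs_entry_le_frob _ i'' k)
    have h2 : frob (Rr (t - s)) ≤ M * Real.exp ((α - ε) * (t - s)) :=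
      hRbd _ (by linarith [hs.2])
    have h3 := eNorm_nonneg (f s)
    calc |((Rr (t - s)).mulVec (f s)) i'| ≤ (d:ℝ) * frob (Rr (t - s)) * eNorm (f s) := h1
      _ ≤ (d:ℝ) * (M * Real.exp ((α - ε) * (t - s))) * eNorm (f s) :=
          mul_le_mul_of_nonneg_right (mul_le_mul_of_nonneg_left h2 hdcast) h3
      _ = ((d:ℝ) * M) * (Real.exp ((α - ε) * (t - s)) * eNorm (f s)) := by ring
  have hPhiint : IntegrableOn (fun s : ℝ => (r (t - s)).mulVec (f s)) (Icc 0 t) := by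
    refine IntegrableOn.congr_fun (hcontpart.integrableOn_Icc.add hRvecint) ?_ measurableSet_Icc
    intro s hs
    simp only [Pi.add_apply, hreq (t - s) (by linarith [hs.2] : (0:ℝ) ≤ t - s),
      Matrix.add_mulVec]
  -- component equalities
  have hPhiApply : (∫ s in Icc (0:ℝ) t, (r (t - s)).mulVec (f s)) i
      = ∫ s in Icc (0:ℝ) t, ((r (t - s)).mulVec (f s)) i := integral_pi_apply hPhiint i
  have hAapply : ∀ j, (∫ s in Ici (0:ℝ), Real.exp (-(α * s)) •
      ((Real.sin (β j * s) • Pstar j + Real.cos (β j * s) • Qstar j).mulVec (f s))) i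
      = ∫ s in Ici (0:ℝ), Real.exp (-(α * s)) *
        ((Real.sin (β j * s) • Pstar j + Real.cos (β j * s) • Qstar j).mulVec (f s) i) :=
    fun j => by
      rw [integral_pi_apply (hAint j) i]; simp only [Pi.smul_apply, smul_eq_mul]
  have hBapply : ∀ j, (∫ s in Ici (0:ℝ), Real.exp (-(α * s)) •
      ((Real.cos (β j * s) • Pstar j - Real.sin (β j * s) • Qstar j).mulVec (f s))) i
      = ∫ s in Ici (0:ℝ), Real.exp (-(α * s)) *
        ((Real.cos (β j * s) • Pstar j - Real.sin (β j * s) • Qstar j).mulVec (f s) i) :=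
    fun j => by
      rw [integral_pi_apply (hBint j) i]; simp only [Pi.smul_apply, smul_eq_mul]
  -- splitting the Ici integrals
  have hdisj : Disjoint (Icc (0:ℝ) t) (Ioi t) :=
    Set.disjoint_left.2 fun x hx hx' => absurd hx.2 (not_le.2 hx')
  have hIoisub : Ioi t ⊆ Ici (0:ℝ) := fun x hx => le_of_lt (lt_of_le_of_lt ht hx)
  have hsplitA : ∀ j, (∫ s in Ici (0:ℝ), Real.exp (-(α * s)) *
      ((Real.sin (β j * s) • Pstar j + Real.cos (β j * s) • Qstar j).mulVec (f s) i))
      = (∫ s in Icc (0:ℝ) t, Real.exp (-(α * s)) *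
        ((Real.sin (β j * s) • Pstar j + Real.cos (β j * s) • Qstar j).mulVec (f s) i))
      + ∫ s in Ioi t, Real.exp (-(α * s)) *
        ((Real.sin (β j * s) • Pstar j + Real.cos (β j * s) • Qstar j).mulVec (f s) i) :=
    fun j => by
      rw [← Icc_union_Ioi_eq_Ici ht, setIntegral_union hdisj measurableSet_Ioi
        ((haint j).mono_set Icc_subset_Ici_self) ((haint j).mono_set hIoisub)]
  have hsplitB : ∀ j, (∫ s in Ici (0:ℝ), Real.exp (-(α * s)) *
      ((Real.cos (β j * s) • Pstar j - Real.sin (β j * s) • Qstar j).mulVec (f s) i))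
      = (∫ s in Icc (0:ℝ) t, Real.exp (-(α * s)) *
        ((Real.cos (β j * s) • Pstar j - Real.sin (β j * s) • Qstar j).mulVec (f s) i))
      + ∫ s in Ioi t, Real.exp (-(α * s)) *
        ((Real.cos (β j * s) • Pstar j - Real.sin (β j * s) • Qstar j).mulVec (f s) i) :=
    fun j => by
      rw [← Icc_union_Ioi_eq_Ici ht, setIntegral_union hdisj measurableSet_Ioi
        ((hbint j).mono_set Icc_subset_Ici_self) ((hbint j).mono_set hIoisub)]
  -- the pointwise key identity on [0, t]
  have hkey : ∀ s ∈ Icc (0:ℝ) t,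
      Real.exp (-(α * t)) * ((r (t - s)).mulVec (f s) i)
        = (∑ j, (Real.sin (β j * t) * (Real.exp (-(α * s)) *
            ((Real.sin (β j * s) • Pstar j + Real.cos (β j * s) • Qstar j).mulVec (f s) i))
          + Real.cos (β j * t) * (Real.exp (-(α * s)) *
            ((Real.cos (β j * s) • Pstar j - Real.sin (β j * s) • Qstar j).mulVec (f s) i))))
          + Real.exp (-(α * t)) * ((Rr (t - s)).mulVec (f s) i) := by
    intro s hs
    rw [hreq (t - s) (by linarith [hs.2] : (0:ℝ) ≤ t - s), Matrix.add_mulVec, Pi.add_apply,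
      mul_add]
    congr 1
    rw [sum_mulVec', Finset.sum_apply, Finset.mul_sum]
    refine Finset.sum_congr rfl fun j _ => ?_
    simp only [Matrix.smul_mulVec, Matrix.add_mulVec, Matrix.sub_mulVec, Pi.smul_apply,
      Pi.add_apply, Pi.sub_apply, smul_eq_mul]
    exact trig_identity α (β j) t s ((Pstar j).mulVec (f s) i) ((Qstar j).mulVec (f s) i)
  -- scalar integrabilities on Icc
  have haIcc : ∀ j, IntegrableOn (fun s => Real.exp (-(α * s)) *
      ((Real.sin (β j * s) • Pstar j + Real.cos (β j * s) • Qstar j).mulVec (f s) i))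
      (Icc 0 t) := fun j => (haint j).mono_set Icc_subset_Ici_self
  have hbIcc : ∀ j, IntegrableOn (fun s => Real.exp (-(α * s)) *
      ((Real.cos (β j * s) • Pstar j - Real.sin (β j * s) • Qstar j).mulVec (f s) i))
      (Icc 0 t) := fun j => (hbint j).mono_set Icc_subset_Ici_self
  have hρIcc : IntegrableOn (fun s : ℝ => ((Rr (t - s)).mulVec (f s)) i) (Icc 0 t) :=
    integrable_apply hRvecint i
  -- the main algebraic computation
  have halg : Real.exp (-(α * t)) * (∫ s in Icc (0:ℝ) t, ((r (t - s)).mulVec (f s)) i)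
      = (∑ j, (Real.sin (β j * t) * (∫ s in Icc (0:ℝ) t, Real.exp (-(α * s)) *
          ((Real.sin (β j * s) • Pstar j + Real.cos (β j * s) • Qstar j).mulVec (f s) i))
        + Real.cos (β j * t) * (∫ s in Icc (0:ℝ) t, Real.exp (-(α * s)) *
          ((Real.cos (β j * s) • Pstar j - Real.sin (β j * s) • Qstar j).mulVec (f s) i))))
        + Real.exp (-(α * t)) * ∫ s in Icc (0:ℝ) t, ((Rr (t - s)).mulVec (f s)) i := by
    have hintj : ∀ j : Fin N, IntegrableOn (fun s =>
        Real.sin (β j * t) * (Real.exp (-(α * s)) *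
          ((Real.sin (β j * s) • Pstar j + Real.cos (β j * s) • Qstar j).mulVec (f s) i))
        + Real.cos (β j * t) * (Real.exp (-(α * s)) *
          ((Real.cos (β j * s) • Pstar j - Real.sin (β j * s) • Qstar j).mulVec (f s) i)))
        (Icc 0 t) := fun j => ((haIcc j).const_mul _).add ((hbIcc j).const_mul _)
    have hint1 : IntegrableOn (fun s => ∑ j,
        (Real.sin (β j * t) * (Real.exp (-(α * s)) *
          ((Real.sin (β j * s) • Pstar j + Real.cos (β j * s) • Qstar j).mulVec (f s) i))
        + Real.cos (β j * t) * (Real.exp (-(α * s)) *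
          ((Real.cos (β j * s) • Pstar j - Real.sin (β j * s) • Qstar j).mulVec (f s) i))))
        (Icc 0 t) := integrable_finset_sum _ fun j _ => hintj j
    have hint2 : IntegrableOn (fun s : ℝ =>
        Real.exp (-(α * t)) * ((Rr (t - s)).mulVec (f s) i)) (Icc 0 t) := hρIcc.const_mul _
    calc Real.exp (-(α * t)) * (∫ s in Icc (0:ℝ) t, ((r (t - s)).mulVec (f s)) i)
        = ∫ s in Icc (0:ℝ) t, Real.exp (-(α * t)) * ((r (t - s)).mulVec (f s) i) :=
          (integral_const_mul _ _).symm
      _ = ∫ s in Icc (0:ℝ) t, ((∑ j, (Real.sin (β j * t) * (Real.exp (-(α * s)) *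
            ((Real.sin (β j * s) • Pstar j + Real.cos (β j * s) • Qstar j).mulVec (f s) i))
          + Real.cos (β j * t) * (Real.exp (-(α * s)) *
            ((Real.cos (β j * s) • Pstar j - Real.sin (β j * s) • Qstar j).mulVec (f s) i))))
          + Real.exp (-(α * t)) * ((Rr (t - s)).mulVec (f s) i)) :=
          setIntegral_congr_fun measurableSet_Icc fun s hs => hkey s hs
      _ = (∫ s in Icc (0:ℝ) t, ∑ j, (Real.sin (β j * t) * (Real.exp (-(α * s)) *
            ((Real.sin (β j * s) • Pstar j + Real.cos (β j * s) • Qstar j).mulVec (f s) i))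
          + Real.cos (β j * t) * (Real.exp (-(α * s)) *
            ((Real.cos (β j * s) • Pstar j - Real.sin (β j * s) • Qstar j).mulVec (f s) i))))
          + ∫ s in Icc (0:ℝ) t, Real.exp (-(α * t)) * ((Rr (t - s)).mulVec (f s) i) :=
          integral_add hint1 hint2
      _ = (∑ j, ∫ s in Icc (0:ℝ) t, (Real.sin (β j * t) * (Real.exp (-(α * s)) *
            ((Real.sin (β j * s) • Pstar j + Real.cos (β j * s) • Qstar j).mulVec (f s) i))
          + Real.cos (β j * t) * (Real.exp (-(α * s)) *
            ((Real.cos (β j * s) • Pstar j - Real.sin (β j * s) • Qstar j).mulVec (f s) i))))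
          + Real.exp (-(α * t)) * ∫ s in Icc (0:ℝ) t, ((Rr (t - s)).mulVec (f s)) i := by
          rw [integral_finset_sum _ fun j _ => hintj j, integral_const_mul]
      _ = _ := by
          congr 1
          refine Finset.sum_congr rfl fun j _ => ?_
          rw [integral_add ((haIcc j).const_mul _) ((hbIcc j).const_mul _), integral_const_mul,
            integral_const_mul]
  -- assemble
  rw [← Real.exp_neg, hPhiApply, halg]
  have hsums : ∑ j, (Real.sin (β j * t) * (∫ s in Ici (0:ℝ), Real.exp (-(α * s)) •
        ((Real.sin (β j * s) • Pstar j + Real.cos (β j * s) • Qstar j).mulVec (f s))) i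
      + Real.cos (β j * t) * (∫ s in Ici (0:ℝ), Real.exp (-(α * s)) •
        ((Real.cos (β j * s) • Pstar j - Real.sin (β j * s) • Qstar j).mulVec (f s))) i)
      = ∑ j, ((Real.sin (β j * t) * ((∫ s in Icc (0:ℝ) t, Real.exp (-(α * s)) *
          ((Real.sin (β j * s) • Pstar j + Real.cos (β j * s) • Qstar j).mulVec (f s) i))
        + ∫ s in Ioi t, Real.exp (-(α * s)) *
          ((Real.sin (β j * s) • Pstar j + Real.cos (β j * s) • Qstar j).mulVec (f s) i))
      + Real.cos (β j * t) * ((∫ s in Icc (0:ℝ) t, Real.exp (-(α * s)) *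
          ((Real.cos (β j * s) • Pstar j - Real.sin (β j * s) • Qstar j).mulVec (f s) i))
        + ∫ s in Ioi t, Real.exp (-(α * s)) *
          ((Real.cos (β j * s) • Pstar j - Real.sin (β j * s) • Qstar j).mulVec (f s) i)))) :=
    Finset.sum_congr rfl fun j _ => by
      rw [hAapply j, hsplitA j, hBapply j, hsplitB j]
  rw [hsums]
  simp only [mul_add, Finset.sum_add_distrib]
  ring
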